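/- Let (xₙ) be a sequence in a finite-dimensional real normed space X and suppose the set Σ of potential sums of ∑xₙ is nonempty. Then Σ is closed under the operation (a, b, t) ↦ (1−t)a + t·b for a, b ∈ Σ and t ∈ ℝ, i.e., Σ contains the whole affine line through any two of its points. -/

import Mathlib

open Filter Topology Finset
open scoped Classical

namespace LS

/-- Pivot/reduction: any box point can be replaced by one with the same weighted sum
and at most `finrank` fractional coordinates. -/
lemma reduce {Y : Type*} [AddCommGroup Y] [Module ℝ Y] [Module.Finite ℝ Y]
    {ι : Type*} (v : ι → Y) (s : Finset ι) (c : ι → ℝ)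
    (hc : ∀ i ∈ s, c i ∈ Set.Icc (0:ℝ) 1) :
    ∃ c' : ι → ℝ, (∀ i ∈ s, c' i ∈ Set.Icc (0:ℝ) 1) ∧
      ∑ i ∈ s, c' i • v i = ∑ i ∈ s, c i • v i ∧
      (s.filter (fun i => c' i ≠ 0 ∧ c' i ≠ 1)).card ≤ Module.finrank ℝ Y := by
  classical
  suffices key : ∀ n (c : ι → ℝ), (∀ i ∈ s, c i ∈ Set.Icc (0:ℝ) 1) →
      (s.filter (fun i => c i ≠ 0 ∧ c i ≠ 1)).card = n →
      ∃ c' : ι → ℝ, (∀ i ∈ s, c' i ∈ Set.Icc (0:ℝ) 1) ∧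
      ∑ i ∈ s, c' i • v i = ∑ i ∈ s, c i • v i ∧
      (s.filter (fun i => c' i ≠ 0 ∧ c' i ≠ 1)).card ≤ Module.finrank ℝ Y from
    key _ c hc rfl
  intro n
  induction n using Nat.strong_induction_on with
  | _ n IH =>
    intro c hc hn
    by_cases hle : n ≤ Module.finrank ℝ Y
    · exact ⟨c, hc, rfl, hn ▸ hle⟩
    push_neg at hle
    set F := s.filter (fun i => c i ≠ 0 ∧ c i ≠ 1) with hF
    have hFs : F ⊆ s := filter_subset _ _
    have hfrac : ∀ i ∈ F, 0 < c i ∧ c i < 1 := by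
      intro i hi
      rw [hF, mem_filter] at hi
      have := hc i hi.1
      constructor
      · exact lt_of_le_of_ne this.1 (Ne.symm hi.2.1)
      · exact lt_of_le_of_ne this.2 hi.2.2
    have hdep : ¬ LinearIndependent ℝ (fun i : F => v i) := by
      intro h
      have h2 := h.fintype_card_le_finrank
      rw [Fintype.card_coe] at h2
      omega
    obtain ⟨g, hgsum, i₀, hgi₀⟩ := Fintype.not_linearIndependent_iff.mp hdep
    set G : ι → ℝ := fun i => if h : i ∈ F then g ⟨i, h⟩ else 0 with hG
    have hGF : ∀ i ∉ F, G i = 0 := fun i hi => dif_neg hi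
    have hGsum : ∑ i ∈ F, G i • v i = 0 := by
      rw [← Finset.sum_attach F (fun i => G i • v i)]
      rw [← hgsum]
      apply Finset.sum_congr rfl
      intro i _
      simp [hG, i.2]
    set T := F.filter (fun i => G i ≠ 0) with hT
    have hi₀F : (i₀ : ι) ∈ F := i₀.2
    have hTne : T.Nonempty := by
      refine ⟨i₀, ?_⟩
      rw [hT, mem_filter]
      refine ⟨i₀.2, ?_⟩
      simpa [hG, i₀.2] using hgi₀
    set τ : ι → ℝ := fun i => if 0 < G i then (1 - c i)/(G i) else c i / (-G i) with hτ
    have hτpos : ∀ i ∈ T, 0 < τ i := by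
      intro i hi
      rw [hT, mem_filter] at hi
      obtain ⟨h1, h2⟩ := hfrac i hi.1
      rcases lt_or_gt_of_ne hi.2 with hneg | hpos
      · rw [hτ]; simp only [if_neg (not_lt.mpr hneg.le)]
        exact div_pos h1 (by linarith)
      · rw [hτ]; simp only [if_pos hpos]
        exact div_pos (by linarith) hpos
    set t := T.inf' hTne τ with ht
    have htpos : 0 < t := by
      rw [ht, Finset.lt_inf'_iff]
      intro i hi; exact hτpos i hi
    set c2 : ι → ℝ := fun i => c i + t * G i with hc2
    have hsame : ∀ i ∉ F, c2 i = c i := by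
      intro i hi; rw [hc2]; simp [hGF i hi]
    have htle : ∀ i ∈ T, t ≤ τ i := fun i hi => Finset.inf'_le _ hi
    -- c2 stays in box
    have hbox : ∀ i ∈ s, c2 i ∈ Set.Icc (0:ℝ) 1 := by
      intro i hi
      by_cases hiF : i ∈ F
      · by_cases hGz : G i = 0
        · rw [hc2]; simp [hGz]; exact hc i hi
        · have hiT : i ∈ T := by rw [hT, mem_filter]; exact ⟨hiF, hGz⟩
          obtain ⟨h1, h2⟩ := hfrac i hiF
          rcases lt_or_gt_of_ne hGz with hneg | hpos
          · have hτi : τ i = c i / (-G i) := by rw [hτ]; simp [not_lt.mpr hneg.le]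
            have := htle i hiT
            rw [hτi] at this
            constructor
            · have : t * (-G i) ≤ c i := by
                rw [← le_div_iff₀ (by linarith : (0:ℝ) < -G i)] at *
                exact this
              rw [hc2]; simp only; nlinarith
            · rw [hc2]; simp only; nlinarith
          · have hτi : τ i = (1 - c i) / G i := by rw [hτ]; simp [hpos]
            have := htle i hiT
            rw [hτi, le_div_iff₀ hpos] at this
            constructor
            · rw [hc2]; simp only; nlinarith
            · rw [hc2]; simp only; nlinarith
      · rw [hsame i hiF]; exact hc i hi
    -- sum preserved
    have hsum2 : ∑ i ∈ s, c2 i • v i = ∑ i ∈ s, c i • v i := by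
      have : ∀ i ∈ s, c2 i • v i = c i • v i + (t * G i) • v i := by
        intro i _; rw [hc2]; simp only; rw [add_smul]
      rw [Finset.sum_congr rfl this, Finset.sum_add_distrib]
      have hz : ∑ i ∈ s, (t * G i) • v i = 0 := by
        rw [← Finset.sum_subset hFs (fun i _ hi => by rw [hGF i hi, mul_zero, zero_smul])]
        have : ∀ i ∈ F, (t * G i) • v i = t • (G i • v i) := by
          intro i _; rw [mul_smul]
        rw [Finset.sum_congr rfl this, ← Finset.smul_sum, hGsum, smul_zero]
      rw [hz, add_zero]
    -- i₁ achieving inf becomes 0 or 1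
    obtain ⟨i₁, hi₁T, hi₁⟩ := Finset.exists_mem_eq_inf' hTne τ
    have hi₁F : i₁ ∈ F := (mem_filter.mp hi₁T).1
    have hi₁bdry : c2 i₁ = 0 ∨ c2 i₁ = 1 := by
      have hGz : G i₁ ≠ 0 := (mem_filter.mp hi₁T).2
      rcases lt_or_gt_of_ne hGz with hneg | hpos
      · left
        rw [hc2]; simp only
        rw [ht, hi₁, hτ]
        simp only [if_neg (not_lt.mpr hneg.le)]
        have h9 : c i₁ / -G i₁ * G i₁ = -c i₁ := by rw [div_neg, neg_mul, div_mul_cancel₀ _ hGz]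
        rw [h9]; ring
      · right
        rw [hc2]; simp only
        rw [ht, hi₁, hτ]
        simp only [if_pos hpos]
        have h9 : (1 - c i₁) / G i₁ * G i₁ = 1 - c i₁ := div_mul_cancel₀ _ hGz
        rw [h9]; ring
    -- fractional set strictly decreased
    have hsub : s.filter (fun i => c2 i ≠ 0 ∧ c2 i ≠ 1) ⊂ F := by
      rw [Finset.ssubset_iff_of_subset]
      · exact ⟨i₁, hi₁F, by
          intro hmem
          rw [mem_filter] at hmem
          rcases hi₁bdry with h | h
          · exact hmem.2.1 h
          · exact hmem.2.2 h⟩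
      · intro i hi
        rw [mem_filter] at hi
        by_contra hiF
        rw [hsame i hiF] at hi
        exact hiF (by rw [hF, mem_filter]; exact ⟨hi.1, hi.2⟩)
    have hlt : (s.filter (fun i => c2 i ≠ 0 ∧ c2 i ≠ 1)).card < n := by
      exact lt_of_lt_of_le (Finset.card_lt_card hsub) (le_of_eq hn)
    obtain ⟨c', h1, h2, h3⟩ := IH _ hlt c2 hbox rfl
    exact ⟨c', h1, h2.trans hsum2, h3⟩



variable {X : Type*} [NormedAddCommGroup X] [NormedSpace ℝ X] [FiniteDimensional ℝ X]

/-- Rounding: a point of the zonotope is within `d·r` of a subset sum. -/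
lemma round {ι : Type*} (w : ι → X) (s : Finset ι) (c : ι → ℝ)
    (hc : ∀ i ∈ s, c i ∈ Set.Icc (0:ℝ) 1) (r : ℝ) (hr : 0 ≤ r)
    (hw : ∀ i ∈ s, ‖w i‖ ≤ r) :
    ∃ T ⊆ s, ‖(∑ i ∈ T, w i) - ∑ i ∈ s, c i • w i‖ ≤ (Module.finrank ℝ X : ℝ) * r := by
  classical
  obtain ⟨c', hbox, hsum, hcard⟩ := reduce w s c hc
  set Fr := s.filter (fun i => c' i ≠ 0 ∧ c' i ≠ 1) with hFr
  refine ⟨s.filter (fun i => c' i = 1), filter_subset _ _, ?_⟩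
  rw [← hsum]
  have h1 : ∑ i ∈ s.filter (fun i => c' i = 1), w i
      = ∑ i ∈ s, (if c' i = 1 then (1:ℝ) else 0) • w i := by
    rw [Finset.sum_filter]
    apply Finset.sum_congr rfl
    intro i _
    by_cases h : c' i = 1 <;> simp [h]
  rw [h1, ← Finset.sum_sub_distrib]
  have h2 : ∀ i ∈ s, (if c' i = 1 then (1:ℝ) else 0) • w i - c' i • w i
      = ((if c' i = 1 then (1:ℝ) else 0) - c' i) • w i := by
    intro i _; rw [sub_smul]
  rw [Finset.sum_congr rfl h2]
  have h3 : ∀ i ∈ s, i ∉ Fr → ((if c' i = 1 then (1:ℝ) else 0) - c' i) • w i = 0 := by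
    intro i hi hiF
    rw [hFr, mem_filter] at hiF
    have hcases : c' i = 0 ∨ c' i = 1 := by tauto
    rcases hcases with h | h <;> simp [h]
  rw [← Finset.sum_subset (filter_subset _ s) h3]
  calc ‖∑ i ∈ Fr, ((if c' i = 1 then (1:ℝ) else 0) - c' i) • w i‖
      ≤ ∑ i ∈ Fr, ‖((if c' i = 1 then (1:ℝ) else 0) - c' i) • w i‖ :=
        norm_sum_le _ _
    _ ≤ ∑ _i ∈ Fr, r := by
        apply Finset.sum_le_sum
        intro i hi
        rw [norm_smul]
        have hiS : i ∈ s := (filter_subset _ _) hi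
        have hb := hbox i hiS
        have hne := (mem_filter.mp hi).2
        have habs : |(if c' i = 1 then (1:ℝ) else 0) - c' i| ≤ 1 := by
          rcases hb with ⟨hb1, hb2⟩
          by_cases h : c' i = 1 <;> simp [h, abs_le] <;> constructor <;> linarith
        calc |(if c' i = 1 then (1:ℝ) else 0) - c' i| * ‖w i‖
            ≤ 1 * r := by
              apply mul_le_mul habs (hw i hiS) (norm_nonneg _) zero_le_one
          _ = r := one_mul r
    _ = (Fr.card : ℝ) * r := by rw [Finset.sum_const, nsmul_eq_mul]
    _ ≤ (Module.finrank ℝ X : ℝ) * r := by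
        apply mul_le_mul_of_nonneg_right _ hr
        exact_mod_cast hcard


/-- Polygonal confinement, sum-zero version. -/
lemma confine_zero {ι : Type*} [DecidableEq ι] (w : ι → X) (r : ℝ) (hr : 0 ≤ r) :
    ∀ n (s : Finset ι), s.card = n → (∀ i ∈ s, ‖w i‖ ≤ r) →
    (∃ c : ι → ℝ, (∀ i ∈ s, c i ∈ Set.Icc (0:ℝ) 1) ∧
        (∑ i ∈ s, c i = (s.card : ℝ) - Module.finrank ℝ X) ∧
        ∑ i ∈ s, c i • w i = 0) ∨ s.card ≤ Module.finrank ℝ X →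
    ∃ l : List ι, l.Nodup ∧ l.toFinset = s ∧
      ∀ p, p <+: l → ‖∑ i ∈ p.toFinset, w i‖ ≤ (Module.finrank ℝ X : ℝ) * r := by
  classical
  set d : ℕ := Module.finrank ℝ X with hd
  intro n
  induction n using Nat.strong_induction_on with
  | _ n IH =>
    intro s hcardn hw hyp
    by_cases hsmall : s.card ≤ d
    · -- small case: any enumeration works
      refine ⟨s.toList, Finset.nodup_toList s, Finset.toList_toFinset s, ?_⟩
      intro p hp
      have hsub : p.toFinset ⊆ s := by
        intro i hi
        rw [List.mem_toFinset] at hi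
        rw [← Finset.mem_toList]
        exact hp.sublist.subset hi
      calc ‖∑ i ∈ p.toFinset, w i‖ ≤ ∑ i ∈ p.toFinset, ‖w i‖ := norm_sum_le _ _
        _ ≤ ∑ _i ∈ p.toFinset, r := Finset.sum_le_sum (fun i hi => hw i (hsub hi))
        _ = (p.toFinset.card : ℝ) * r := by rw [Finset.sum_const, nsmul_eq_mul]
        _ ≤ (d : ℝ) * r := by
            apply mul_le_mul_of_nonneg_right _ hr
            exact_mod_cast le_trans (Finset.card_le_card hsub) hsmall
    · push_neg at hsmall
      obtain ⟨c, hcbox, hcsum, hcw⟩ := hyp.resolve_right (not_le.mpr hsmall)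
      set k := s.card with hk
      have hdk : (d:ℝ) < (k:ℝ) := by exact_mod_cast hsmall
      -- total sum bound
      have htotal : ‖∑ i ∈ s, w i‖ ≤ (d:ℝ) * r := by
        have he : ∑ i ∈ s, w i = ∑ i ∈ s, (1 - c i) • w i := by
          rw [Finset.sum_congr rfl (fun i _ => sub_smul 1 (c i) (w i))]
          rw [Finset.sum_sub_distrib, hcw, sub_zero]
          simp
        rw [he]
        calc ‖∑ i ∈ s, (1 - c i) • w i‖ ≤ ∑ i ∈ s, ‖(1 - c i) • w i‖ := norm_sum_le _ _
          _ ≤ ∑ i ∈ s, (1 - c i) * r := by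
              apply Finset.sum_le_sum
              intro i hi
              rw [norm_smul, Real.norm_eq_abs,
                abs_of_nonneg (by linarith [(hcbox i hi).2] : (0:ℝ) ≤ 1 - c i)]
              exact mul_le_mul_of_nonneg_left (hw i hi) (by linarith [(hcbox i hi).2])
          _ = (d:ℝ) * r := by
              rw [← Finset.sum_mul, Finset.sum_sub_distrib, hcsum, Finset.sum_const,
                nsmul_eq_mul, mul_one, ← hk]
              ring
      -- scaled coefficients
      set θ : ℝ := ((k:ℝ) - 1 - d) / ((k:ℝ) - d) with hθ
      have hd1k : (d:ℝ) + 1 ≤ (k:ℝ) := by exact_mod_cast hsmall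
      have hθ0 : 0 ≤ θ := by
        apply div_nonneg <;> linarith
      have hθ1 : θ ≤ 1 := by
        rw [hθ, div_le_one (by linarith)]; linarith
      have hkd : (k:ℝ) - d ≠ 0 := by linarith
      set ct : ι → ℝ := fun i => θ * c i with hct
      have hctbox : ∀ i ∈ s, ct i ∈ Set.Icc (0:ℝ) 1 := by
        intro i hi
        obtain ⟨h1, h2⟩ := hcbox i hi
        constructor
        · exact mul_nonneg hθ0 h1
        · calc θ * c i ≤ 1 * 1 := mul_le_mul hθ1 h2 h1 zero_le_one
            _ = 1 := mul_one 1
      -- apply reduce in ℝ × X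
      obtain ⟨β, hβbox, hβsum, hβcard⟩ :=
        reduce (fun i => ((1:ℝ), w i)) s ct hctbox
      have hfrprod : Module.finrank ℝ (ℝ × X) = 1 + d := by
        rw [Module.finrank_prod, Module.finrank_self]
      rw [hfrprod] at hβcard
      have hβ1 : ∑ i ∈ s, β i = (k:ℝ) - 1 - d := by
        have := congrArg Prod.fst hβsum
        rw [Prod.fst_sum, Prod.fst_sum] at this
        simp only [Prod.smul_fst, smul_eq_mul, mul_one] at this
        rw [this, hct]
        simp only [← Finset.mul_sum, hcsum]
        rw [hθ, div_mul_cancel₀ _ hkd]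
      have hβ2 : ∑ i ∈ s, β i • w i = 0 := by
        have := congrArg Prod.snd hβsum
        rw [Prod.snd_sum, Prod.snd_sum] at this
        simp only [Prod.smul_snd] at this
        rw [this]
        have : ∀ i ∈ s, ct i • w i = θ • (c i • w i) := by
          intro i _; rw [hct]; simp only [smul_smul]
        rw [Finset.sum_congr rfl this, ← Finset.smul_sum, hcw, smul_zero]
      -- find a zero coordinate
      have hzero : ∃ i ∈ s, β i = 0 := by
        by_contra hno
        push_neg at hno
        set Ones := s.filter (fun i => β i = 1) with hOnes
        set Fr := s.filter (fun i => β i ≠ 0 ∧ β i ≠ 1) with hFre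
        have hFr' : Fr = s.filter (fun i => ¬ (β i = 1)) := by
          apply Finset.filter_congr
          intro i hi
          simp only [ne_eq, eq_iff_iff]
          constructor
          · tauto
          · intro h; exact ⟨hno i hi, h⟩
        have hsplit : Ones.card + Fr.card = k := by
          rw [hOnes, hFr', hk]
          exact Finset.card_filter_add_card_filter_not _
        have hOnesle : (Ones.card : ℝ) ≤ (k:ℝ) - 1 - d := by
          rw [← hβ1]
          calc (Ones.card : ℝ) = ∑ i ∈ Ones, β i := by
                rw [Finset.sum_congr rfl (fun i hi => (mem_filter.mp hi).2),
                  Finset.sum_const, nsmul_eq_mul, mul_one]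
            _ ≤ ∑ i ∈ s, β i := by
                apply Finset.sum_le_sum_of_subset_of_nonneg (filter_subset _ _)
                intro i hi _
                exact (hβbox i hi).1
        have hFrle : (Fr.card : ℝ) ≤ 1 + d := by exact_mod_cast hβcard
        have hOneseq : (Ones.card : ℝ) = (k:ℝ) - 1 - d := by
          have : ((Ones.card : ℝ)) + Fr.card = k := by exact_mod_cast hsplit
          linarith
        have hFrsum : ∑ i ∈ Fr, β i = 0 := by
          have hs : ∑ i ∈ Ones, β i + ∑ i ∈ Fr, β i = ∑ i ∈ s, β i := by
            rw [hOnes, hFr']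
            exact Finset.sum_filter_add_sum_filter_not s _ _
          have hones : ∑ i ∈ Ones, β i = (Ones.card : ℝ) := by
            rw [Finset.sum_congr rfl (fun i hi => (mem_filter.mp hi).2),
              Finset.sum_const, nsmul_eq_mul, mul_one]
          rw [hones, hOneseq, hβ1] at hs
          linarith
        have hFrne : Fr.Nonempty := by
          rw [← Finset.card_pos]
          have : ((Fr.card : ℝ)) = 1 + d := by
            have : ((Ones.card : ℝ)) + Fr.card = k := by exact_mod_cast hsplit
            linarith
          have : (0:ℝ) < Fr.card := by rw [this]; positivity
          exact_mod_cast this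
        have : (0:ℝ) < ∑ i ∈ Fr, β i := by
          apply Finset.sum_pos _ hFrne
          intro i hi
          have hiS : i ∈ s := (filter_subset _ _) hi
          have := (hβbox i hiS).1
          have := (mem_filter.mp hi).2.1
          exact lt_of_le_of_ne ‹0 ≤ β i› (Ne.symm ‹β i ≠ 0›)
        rw [hFrsum] at this
        exact lt_irrefl 0 this
      obtain ⟨i₂, hi₂s, hβi₂⟩ := hzero
      set s' := s.erase i₂ with hs'
      have hcard' : s'.card = n - 1 := by
        rw [hs', Finset.card_erase_of_mem hi₂s, ← hk, hcardn]
      have hcardR : (s'.card : ℝ) = (k:ℝ) - 1 := by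
        have h1 : s'.card = k - 1 := by rw [hs', Finset.card_erase_of_mem hi₂s, ← hk]
        have h2 : 1 ≤ k := by omega
        rw [h1]
        push_cast [h2]
        ring
      have hyp' : (∃ c : ι → ℝ, (∀ i ∈ s', c i ∈ Set.Icc (0:ℝ) 1) ∧
          (∑ i ∈ s', c i = (s'.card : ℝ) - d) ∧
          ∑ i ∈ s', c i • w i = 0) ∨ s'.card ≤ d := by
        left
        refine ⟨β, fun i hi => hβbox i (Finset.erase_subset _ _ hi), ?_, ?_⟩
        · rw [hcardR, hs', Finset.sum_erase s hβi₂, hβ1]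
        · rw [hs', Finset.sum_erase s (show β i₂ • w i₂ = 0 by rw [hβi₂, zero_smul]), hβ2]
      obtain ⟨l', hl'nd, hl'fin, hl'pre⟩ :=
        IH (n-1) (by omega) s' hcard' (fun i hi => hw i (Finset.erase_subset _ _ hi)) hyp'
      refine ⟨l' ++ [i₂], ?_, ?_, ?_⟩
      · rw [List.nodup_append]
        refine ⟨hl'nd, List.nodup_singleton i₂, ?_⟩
        intro i hi j hj hmem
        rw [List.mem_singleton] at hj; rw [hj] at hmem
        have hmem2 : i ∈ s' := by rw [← hl'fin, List.mem_toFinset]; exact hi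
        rw [hs', hmem] at hmem2
        exact (Finset.notMem_erase i₂ s) hmem2
      · rw [List.toFinset_append, hl'fin]
        simp only [List.toFinset_cons, List.toFinset_nil, insert_empty_eq]
        rw [Finset.union_comm, hs', ← Finset.insert_eq, Finset.insert_erase hi₂s]
      · intro p hp
        rw [List.prefix_concat_iff] at hp
        rcases hp with hp | hp
        · subst hp
          have : (l' ++ [i₂]).toFinset = s := by
            rw [List.toFinset_append, hl'fin]
            simp only [List.toFinset_cons, List.toFinset_nil, insert_empty_eq]
            rw [Finset.union_comm, hs', ← Finset.insert_eq, Finset.insert_erase hi₂s]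
          rw [this]
          exact htotal
        · exact hl'pre p hp

/-- helper: prefixes of a filterMap come from prefixes. -/
lemma prefix_filterMap {α β : Type*} (f : α → Option β) :
    ∀ (l : List α) (p' : List β), p' <+: l.filterMap f →
      ∃ p, p <+: l ∧ p.filterMap f = p' := by
  intro l
  induction l with
  | nil =>
    intro p' hp'
    simp only [List.filterMap_nil] at hp'
    exact ⟨[], List.nil_prefix, by simpa using List.prefix_nil.mp hp'⟩
  | cons a l IH =>
    intro p' hp'
    rw [List.filterMap_cons] at hp'
    cases hfa : f a with
    | none =>
      rw [hfa] at hp'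
      obtain ⟨p, hp, he⟩ := IH p' hp'
      exact ⟨a :: p, List.cons_prefix_cons.mpr ⟨rfl, hp⟩, by rw [List.filterMap_cons, hfa, he]⟩
    | some b =>
      rw [hfa] at hp'
      cases p' with
      | nil => exact ⟨[], List.nil_prefix, rfl⟩
      | cons b' q =>
        rw [List.cons_prefix_cons] at hp'
        obtain ⟨rfl, hq⟩ := hp'
        obtain ⟨p, hp, he⟩ := IH q hq
        exact ⟨a :: p, List.cons_prefix_cons.mpr ⟨rfl, hp⟩,
          by rw [List.filterMap_cons, hfa, he]⟩

/-- Polygonal confinement for zero-sum families. -/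
lemma confine_zero' {ι : Type*} [DecidableEq ι] (w : ι → X) (r : ℝ) (hr : 0 ≤ r)
    (s : Finset ι) (hw : ∀ i ∈ s, ‖w i‖ ≤ r) (hsum : ∑ i ∈ s, w i = 0) :
    ∃ l : List ι, l.Nodup ∧ l.toFinset = s ∧
      ∀ p, p <+: l → ‖∑ i ∈ p.toFinset, w i‖ ≤ (Module.finrank ℝ X : ℝ) * r := by
  classical
  set d : ℕ := Module.finrank ℝ X with hd
  apply confine_zero w r hr s.card s rfl hw
  by_cases hsm : s.card ≤ d
  · right; exact hsm
  · left
    push_neg at hsm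
    have hk0 : (0:ℝ) < s.card := by
      have : 0 < s.card := by omega
      exact_mod_cast this
    have hdk : (d:ℝ) < s.card := by exact_mod_cast hsm
    refine ⟨fun _ => ((s.card : ℝ) - d) / s.card, ?_, ?_, ?_⟩
    · intro i _
      constructor
      · apply div_nonneg (by linarith) (by linarith)
      · rw [div_le_one hk0]; linarith
    · rw [Finset.sum_const, nsmul_eq_mul, mul_div_cancel₀ _ (ne_of_gt hk0)]
    · rw [← Finset.smul_sum (r := ((s.card : ℝ) - d) / s.card) (s := s) (f := w)] at *
      · rw [hsum, smul_zero]

/-- Polygonal confinement with small nonzero sum. -/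
lemma confine {ι : Type*} [DecidableEq ι] (w : ι → X) (r r' : ℝ) (hr : 0 ≤ r)
    (hr' : 0 ≤ r') (s : Finset ι) (hw : ∀ i ∈ s, ‖w i‖ ≤ r)
    (hsum : ‖∑ i ∈ s, w i‖ ≤ r') :
    ∃ l : List ι, l.Nodup ∧ l.toFinset = s ∧
      ∀ p, p <+: l →
        ‖∑ i ∈ p.toFinset, w i‖ ≤ (Module.finrank ℝ X : ℝ) * (r + r') + r' := by
  classical
  set d : ℕ := Module.finrank ℝ X with hd
  set w' : Option ι → X := fun o => o.elim (-∑ i ∈ s, w i) w with hw'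
  set s' : Finset (Option ι) := insert none (s.image some) with hs'
  have hnone : none ∉ s.image some := by simp
  have himgsum : ∑ o ∈ s.image some, w' o = ∑ i ∈ s, w i := by
    rw [Finset.sum_image (by intro a _ b _ h; exact Option.some_injective _ h)]
    simp [hw']
  have hsum0 : ∑ o ∈ s', w' o = 0 := by
    rw [hs', Finset.sum_insert hnone, himgsum]
    simp [hw']
  have hwb : ∀ o ∈ s', ‖w' o‖ ≤ r + r' := by
    intro o ho
    rw [hs', Finset.mem_insert] at ho
    rcases ho with rfl | ho
    · simp only [hw', Option.elim]
      rw [norm_neg]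
      linarith
    · obtain ⟨i, hi, rfl⟩ := Finset.mem_image.mp ho
      have := hw i hi
      simp only [hw', Option.elim]
      linarith
  obtain ⟨l, hlnd, hlfin, hlpre⟩ := confine_zero' w' (r + r') (by linarith) s' hwb hsum0
  set l2 : List ι := l.filterMap id with hl2
  have hmem2 : ∀ i : ι, i ∈ l2 ↔ some i ∈ l := by
    intro i
    rw [hl2, List.mem_filterMap]
    constructor
    · rintro ⟨a, ha, he⟩
      have : a = some i := he
      rwa [this] at ha
    · intro h; exact ⟨some i, h, rfl⟩
  refine ⟨l2, ?_, ?_, ?_⟩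
  · apply List.Nodup.filterMap _ hlnd
    intro a a' b hb hb'
    have h1 : a = some b := hb
    have h2 : a' = some b := hb'
    rw [h1, h2]
  · ext i
    rw [List.mem_toFinset, hmem2, ← List.mem_toFinset, hlfin, hs', Finset.mem_insert]
    simp
  · intro p' hp'
    obtain ⟨p, hp, hpe⟩ := prefix_filterMap id l p' hp'
    have hkey : ∑ i ∈ p'.toFinset, w i
        = ∑ o ∈ p.toFinset, w' o - (if none ∈ p.toFinset then w' none else 0) := by
      have himg : p.toFinset.erase none = p'.toFinset.image some := by
        ext o
        rw [Finset.mem_erase, Finset.mem_image]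
        constructor
        · rintro ⟨hne, hmem⟩
          cases o with
          | none => exact absurd rfl hne
          | some i =>
            refine ⟨i, ?_, rfl⟩
            rw [List.mem_toFinset, ← hpe, List.mem_filterMap]
            exact ⟨some i, List.mem_toFinset.mp hmem, rfl⟩
        · rintro ⟨i, hi, rfl⟩
          refine ⟨by simp, ?_⟩
          rw [List.mem_toFinset]
          rw [List.mem_toFinset, ← hpe, List.mem_filterMap] at hi
          obtain ⟨a, ha, hae⟩ := hi
          have : a = some i := hae
          rwa [← this]
      have hsum_erase : ∑ o ∈ p.toFinset.erase none, w' o = ∑ i ∈ p'.toFinset, w i := by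
        rw [himg, Finset.sum_image (by intro a _ b _ h; exact Option.some_injective _ h)]
        simp [hw']
      by_cases hn : none ∈ p.toFinset
      · rw [if_pos hn, ← hsum_erase, ← Finset.add_sum_erase _ _ hn]
        abel
      · rw [if_neg hn, sub_zero, ← hsum_erase, Finset.erase_eq_of_notMem hn]
    rw [hkey]
    have h1 := hlpre p hp
    have h2 : ‖(if none ∈ p.toFinset then w' none else 0)‖ ≤ r' := by
      split
      · simp only [hw', Option.elim]; rw [norm_neg]; exact hsum
      · simp; linarith
    calc ‖∑ o ∈ p.toFinset, w' o - (if none ∈ p.toFinset then w' none else 0)‖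
        ≤ ‖∑ o ∈ p.toFinset, w' o‖ + ‖(if none ∈ p.toFinset then w' none else 0)‖ :=
          norm_sub_le _ _
      _ ≤ (d:ℝ) * (r + r') + r' := add_le_add h1 h2

/-- Separation lemma: v (annihilated by all absolutely-convergent functionals)
is approximable by tail subset sums. -/
lemma approx_tail (y : ℕ → X) (a v : X)
    (hS : Tendsto (fun m => ∑ n ∈ Finset.range m, y n) atTop (𝓝 a))
    (hv : ∀ f : X →L[ℝ] ℝ, Summable (fun n => |f (y n)|) → f v = 0)
    (N : ℕ) (ε : ℝ) (hε : 0 < ε) (htail : ∀ i, N ≤ i → ‖y i‖ ≤ ε) :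
    ∃ G : Finset ℕ, (∀ i ∈ G, N ≤ i) ∧
      ‖(∑ i ∈ G, y i) - v‖ ≤ ((Module.finrank ℝ X : ℝ) + 1) * ε := by
  classical
  set Z : Set X := {z | ∃ (M : ℕ) (c : ℕ → ℝ), (∀ i, c i ∈ Set.Icc (0:ℝ) 1) ∧
    z = ∑ i ∈ Finset.Ico N M, c i • y i} with hZ
  have h0Z : (0:X) ∈ Z := ⟨N, fun _ => 0, fun i => ⟨le_refl 0, zero_le_one⟩, by simp⟩
  have hZconv : Convex ℝ Z := by
    rintro z₁ ⟨M₁, c₁, hc₁, rfl⟩ z₂ ⟨M₂, c₂, hc₂, rfl⟩ θ₁ θ₂ hθ₁ hθ₂ hθs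
    set M := max M₁ M₂ with hM
    set c₁' : ℕ → ℝ := fun i => if i < M₁ then c₁ i else 0 with hc₁'
    set c₂' : ℕ → ℝ := fun i => if i < M₂ then c₂ i else 0 with hc₂'
    have he₁ : ∑ i ∈ Finset.Ico N M, c₁' i • y i = ∑ i ∈ Finset.Ico N M₁, c₁ i • y i := by
      rw [← Finset.sum_subset (Finset.Ico_subset_Ico le_rfl (le_max_left M₁ M₂))]
      · apply Finset.sum_congr rfl
        intro i hi
        simp only [hc₁', if_pos (Finset.mem_Ico.mp hi).2]
      · intro i hi hni
        have : ¬ i < M₁ := by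
          intro h
          exact hni (Finset.mem_Ico.mpr ⟨(Finset.mem_Ico.mp hi).1, h⟩)
        simp only [hc₁', if_neg this, zero_smul]
    have he₂ : ∑ i ∈ Finset.Ico N M, c₂' i • y i = ∑ i ∈ Finset.Ico N M₂, c₂ i • y i := by
      rw [← Finset.sum_subset (Finset.Ico_subset_Ico le_rfl (le_max_right M₁ M₂))]
      · apply Finset.sum_congr rfl
        intro i hi
        simp only [hc₂', if_pos (Finset.mem_Ico.mp hi).2]
      · intro i hi hni
        have : ¬ i < M₂ := by
          intro h
          exact hni (Finset.mem_Ico.mpr ⟨(Finset.mem_Ico.mp hi).1, h⟩)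
        simp only [hc₂', if_neg this, zero_smul]
    refine ⟨M, fun i => θ₁ * c₁' i + θ₂ * c₂' i, ?_, ?_⟩
    · intro i
      have hb₁ : c₁' i ∈ Set.Icc (0:ℝ) 1 := by
        simp only [hc₁']; split
        · exact hc₁ i
        · exact ⟨le_refl 0, zero_le_one⟩
      have hb₂ : c₂' i ∈ Set.Icc (0:ℝ) 1 := by
        simp only [hc₂']; split
        · exact hc₂ i
        · exact ⟨le_refl 0, zero_le_one⟩
      constructor
      · show (0:ℝ) ≤ θ₁ * c₁' i + θ₂ * c₂' i
        have := mul_nonneg hθ₁ hb₁.1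
        have := mul_nonneg hθ₂ hb₂.1
        linarith
      · show θ₁ * c₁' i + θ₂ * c₂' i ≤ 1
        have h1 : θ₁ * c₁' i ≤ θ₁ := by nlinarith [hb₁.2]
        have h2 : θ₂ * c₂' i ≤ θ₂ := by nlinarith [hb₂.2]
        linarith
    · rw [← he₁, ← he₂, Finset.smul_sum, Finset.smul_sum, ← Finset.sum_add_distrib]
      apply Finset.sum_congr rfl
      intro i _
      rw [add_smul, smul_smul, smul_smul]
  -- v is in the closure of Z
  have hvcl : v ∈ closure Z := by
    by_contra hvc
    obtain ⟨f, u, hfu, hufv⟩ :=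
      geometric_hahn_banach_closed_point (hZconv.closure) isClosed_closure hvc
    have hupos : 0 < u := by
      have := hfu 0 (subset_closure h0Z)
      rwa [map_zero] at this
    -- positive-part partial sums are bounded by u
    have hpos : ∀ M : ℕ, ∑ i ∈ Finset.Ico N M, max (f (y i)) 0 ≤ u := by
      intro M
      set c : ℕ → ℝ := fun i => if 0 ≤ f (y i) then 1 else 0 with hc
      have hzZ : (∑ i ∈ Finset.Ico N M, c i • y i) ∈ Z := by
        refine ⟨M, c, ?_, rfl⟩
        intro i; simp only [hc]; split
        · exact ⟨zero_le_one, le_refl 1⟩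
        · exact ⟨le_refl 0, zero_le_one⟩
      have := hfu _ (subset_closure hzZ)
      rw [map_sum] at this
      have he : ∀ i ∈ Finset.Ico N M, f (c i • y i) = max (f (y i)) 0 := by
        intro i _
        rw [map_smul]
        simp only [hc]
        split
        · rw [one_smul]
          exact (max_eq_left (by assumption)).symm
        · rw [zero_smul]
          push_neg at *
          exact (max_eq_right (by linarith)).symm
      rw [Finset.sum_congr rfl he] at this
      exact this.le
    -- partial sums of f∘y are bounded below
    have hfS : Tendsto (fun m => ∑ n ∈ Finset.range m, f (y n)) atTop (𝓝 (f a)) := by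
      have : (fun m => ∑ n ∈ Finset.range m, f (y n))
          = fun m => f (∑ n ∈ Finset.range m, y n) := by
        funext m; rw [map_sum]
      rw [this]
      exact (f.continuous.tendsto a).comp hS
    obtain ⟨L, hL⟩ := hfS.bddBelow_range
    have hLb : ∀ m, L ≤ ∑ n ∈ Finset.range m, f (y n) := by
      intro m; exact hL ⟨m, rfl⟩
    -- summability of |f∘y|
    have hsummable : Summable (fun n => |f (y n)|) := by
      apply summable_of_sum_range_le (c := 2 * ((∑ i ∈ Finset.range N, max (f (y i)) 0) + u) - L)
      · intro n; exact abs_nonneg _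
      · intro m
        have habs : ∀ x : ℝ, |x| = 2 * max x 0 - x := by
          intro x
          rcases le_or_gt 0 x with h | h
          · rw [abs_of_nonneg h, max_eq_left h]; ring
          · rw [abs_of_neg h, max_eq_right h.le]; ring
        have : ∑ i ∈ Finset.range m, |f (y i)|
            = 2 * (∑ i ∈ Finset.range m, max (f (y i)) 0) - ∑ i ∈ Finset.range m, f (y i) := by
          rw [Finset.mul_sum, ← Finset.sum_sub_distrib]
          apply Finset.sum_congr rfl
          intro i _
          exact habs _
        rw [this]
        have hmaxb : ∑ i ∈ Finset.range m, max (f (y i)) 0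
            ≤ (∑ i ∈ Finset.range N, max (f (y i)) 0) + u := by
          rcases le_or_gt m N with h | h
          · have h1 : ∑ i ∈ Finset.range m, max (f (y i)) 0
                ≤ ∑ i ∈ Finset.range N, max (f (y i)) 0 := by
              apply Finset.sum_le_sum_of_subset_of_nonneg
                (Finset.range_subset_range.mpr h)
              intro i _ _; exact le_max_right _ _
            linarith
          · rw [← Finset.sum_range_add_sum_Ico _ h.le]
            have := hpos m
            linarith
        have := hLb m
        linarith
    have := hv f hsummable
    rw [this] at hufv
    linarith
  -- extract an approximation and round it
  obtain ⟨z, hzZ, hzd⟩ := Metric.mem_closure_iff.mp hvcl ε hε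
  obtain ⟨M, c, hc, rfl⟩ := hzZ
  obtain ⟨T, hT, hTd⟩ := round y (Finset.Ico N M) c (fun i _ => hc i) ε hε.le
    (fun i hi => htail i (Finset.mem_Ico.mp hi).1)
  refine ⟨T, fun i hi => (Finset.mem_Ico.mp (hT hi)).1, ?_⟩
  have hzv : ‖(∑ i ∈ Finset.Ico N M, c i • y i) - v‖ ≤ ε := by
    rw [dist_eq_norm, norm_sub_rev] at hzd
    exact hzd.le
  calc ‖(∑ i ∈ T, y i) - v‖
      ≤ ‖(∑ i ∈ T, y i) - ∑ i ∈ Finset.Ico N M, c i • y i‖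
        + ‖(∑ i ∈ Finset.Ico N M, c i • y i) - v‖ := norm_sub_le_norm_sub_add_norm_sub _ _ _
    _ ≤ (Module.finrank ℝ X : ℝ) * ε + ε := add_le_add hTd hzv
    _ = ((Module.finrank ℝ X : ℝ) + 1) * ε := by ring

/-- Dependent recursion with choice. -/
lemma nat_rec_choice {S : Type*} {Inv : ℕ → S → Prop} {Link : ℕ → S → S → Prop}
    (h0 : ∃ s, Inv 0 s) (hstep : ∀ k s, Inv k s → ∃ s', Inv (k+1) s' ∧ Link k s s') :
    ∃ g : ℕ → S, (∀ k, Inv k (g k)) ∧ ∀ k, Link k (g k) (g (k+1)) := by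
  obtain ⟨s0, h0⟩ := h0
  choose! f hf hl using hstep
  have key : ∀ k, Inv k (Nat.rec s0 f k) := by
    intro k
    induction k with
    | zero => exact h0
    | succ k ih => exact hf k _ ih
  exact ⟨fun k => Nat.rec s0 f k, key, fun k => hl k _ (key k)⟩

/-- Partial sums along a nodup list as Finset sums over take. -/
lemma take_toFinset_sum {M : Type*} [AddCommMonoid M] (y : ℕ → M) (l : List ℕ)
    (hnd : l.Nodup) : ∀ m, m ≤ l.length →
    ∑ i ∈ (l.take m).toFinset, y i = ∑ n ∈ Finset.range m, y (l.getD n 0) := by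
  intro m
  induction m with
  | zero => simp
  | succ m IH =>
    intro hm
    have hmlt : m < l.length := hm
    have htake : l.take (m+1) = l.take m ++ [l[m]] := by
      rw [List.take_succ, List.getElem?_eq_getElem hmlt]
      rfl
    have hnotmem : l[m] ∉ l.take m := by
      intro hmem
      obtain ⟨k, hk, hke⟩ := List.getElem_of_mem hmem
      have hk2 : k < m := by
        have := hk
        rw [List.length_take] at this
        omega
      have hk3 : k < l.length := by omega
      rw [List.getElem_take] at hke
      have := (List.Nodup.getElem_inj_iff hnd (hi := hk3) (hj := hmlt)).mp hke
      omega
    rw [htake, List.toFinset_append]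
    have hdisj : Disjoint (l.take m).toFinset ([l[m]]).toFinset := by
      simp only [List.toFinset_cons, List.toFinset_nil, insert_empty_eq]
      rw [Finset.disjoint_singleton_right]
      rw [List.mem_toFinset]
      exact hnotmem
    rw [Finset.sum_union hdisj, Finset.sum_range_succ, IH hmlt.le]
    simp only [List.toFinset_cons, List.toFinset_nil, insert_empty_eq, Finset.sum_singleton]
    rw [List.getD_eq_getElem l 0 hmlt]

/-- The main rearrangement construction. -/
lemma rearrange (y : ℕ → X) (a v : X)
    (hS : Tendsto (fun m => ∑ n ∈ Finset.range m, y n) atTop (𝓝 a))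
    (hy0 : Tendsto y atTop (𝓝 0))
    (hv : ∀ f : X →L[ℝ] ℝ, Summable (fun n => |f (y n)|) → f v = 0) :
    ∃ ρ : Equiv.Perm ℕ,
      Tendsto (fun m => ∑ n ∈ Finset.range m, y (ρ n)) atTop (𝓝 (a + v)) := by
  classical
  set d : ℝ := (Module.finrank ℝ X : ℝ) with hd
  have hd0 : (0:ℝ) ≤ d := Nat.cast_nonneg _
  set D : ℝ := d + 1 with hD
  have hD1 : 1 ≤ D := by linarith
  have hD0 : 0 < D := by linarith
  set η : ℕ → ℝ := fun k => (1/2 : ℝ)^k with hη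
  have hηpos : ∀ k, 0 < η k := fun k => pow_pos (by norm_num) k
  have hηmono : ∀ j k, j ≤ k → η k ≤ η j := fun j k h =>
    pow_le_pow_of_le_one (by norm_num) (by norm_num) h
  have hη0 : Tendsto η atTop (𝓝 0) :=
    tendsto_pow_atTop_nhds_zero_of_lt_one (by norm_num) (by norm_num)
  set Cb : ℝ := 5*d + 6 with hCb
  have hCb0 : 0 < Cb := by positivity
  have htails : ∀ ε : ℝ, 0 < ε → ∃ N₁ : ℕ,
      (∀ m, N₁ ≤ m → ‖(∑ n ∈ Finset.range m, y n) - a‖ ≤ ε) ∧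
      (∀ i, N₁ ≤ i → ‖y i‖ ≤ ε) := by
    intro ε hε
    obtain ⟨N1, h1⟩ := Metric.tendsto_atTop.mp hS ε hε
    obtain ⟨N2, h2⟩ := Metric.tendsto_atTop.mp hy0 ε hε
    refine ⟨max N1 N2, fun m hm => ?_, fun i hi => ?_⟩
    · have := h1 m (le_trans (le_max_left _ _) hm)
      rw [dist_eq_norm] at this
      exact this.le
    · have := h2 i (le_trans (le_max_right _ _) hi)
      rw [dist_eq_norm, sub_zero] at this
      exact this.le
  have hDdiv : ∀ ε : ℝ, 0 < ε → (d + 1) * (ε / D) = ε := by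
    intro ε hε
    rw [hD, mul_div_assoc']
    field_simp
  -- Invariant and step existence
  obtain ⟨g, hg, hlink⟩ := nat_rec_choice
    (S := ℕ × Finset ℕ × List ℕ)
    (Inv := fun k s =>
      (∀ m, s.1 ≤ m → ‖(∑ n ∈ Finset.range m, y n) - a‖ ≤ η k) ∧
      (∀ i, s.1 ≤ i → ‖y i‖ ≤ η k) ∧
      (∀ i ∈ s.2.1, s.1 ≤ i) ∧
      ‖(∑ i ∈ s.2.1, y i) - v‖ ≤ η k ∧
      s.2.2.Nodup ∧
      s.2.2.toFinset = Finset.range s.1 ∪ s.2.1 ∧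
      k ≤ s.2.2.length)
    (Link := fun k s s' =>
      s.2.2 <+: s'.2.2 ∧ s.1 < s'.1 ∧
      (∀ m, s.2.2.length ≤ m → m ≤ s'.2.2.length →
        ‖(∑ i ∈ (s'.2.2.take m).toFinset, y i) - (a + v)‖ ≤ Cb * η k))
    (by -- initial state
      obtain ⟨N₁, hN1, hN2⟩ := htails (η 0 / D) (by positivity)
      have hled : η 0 / D ≤ η 0 := div_le_self (hηpos 0).le hD1
      obtain ⟨G, hGge, hGsum⟩ := approx_tail y a v hS hv N₁ (η 0 / D) (by positivity)
        (fun i hi => hN2 i hi)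
      refine ⟨(N₁, G, (Finset.range N₁ ∪ G).toList), ?_, ?_, ?_, ?_, ?_, ?_, ?_⟩
      · exact fun m hm => le_trans (hN1 m hm) hled
      · exact fun i hi => le_trans (hN2 i hi) hled
      · exact hGge
      · rw [← hd] at hGsum
        rwa [hDdiv (η 0) (hηpos 0)] at hGsum
      · exact Finset.nodup_toList _
      · exact Finset.toList_toFinset _
      · exact Nat.zero_le _)
    (by -- step
      rintro k ⟨N, F, L⟩ ⟨I1, I2, I3, I4, I5, I6, I7⟩
      simp only at I1 I2 I3 I4 I5 I6 I7
      obtain ⟨N₁, hN1a, hN1b⟩ := htails (η (k+1) / D) (by positivity)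
      have hled : η (k+1) / D ≤ η (k+1) := div_le_self (hηpos _).le hD1
      set N' : ℕ := max N₁ (max (N+1) (F.sup id + 2)) with hN'
      have hN'N₁ : N₁ ≤ N' := le_max_left _ _
      have hN'N : N + 1 ≤ N' := le_trans (le_max_left _ _) (le_max_right _ _)
      have hN'F : ∀ i ∈ F, i + 2 ≤ N' := by
        intro i hi
        have : i ≤ F.sup id := Finset.le_sup (f := id) hi
        have h2 : F.sup id + 2 ≤ N' := le_trans (le_max_right _ _) (le_max_right _ _)
        omega
      obtain ⟨G, hGge, hGsum⟩ := approx_tail y a v hS hv N' (η (k+1) / D) (by positivity)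
        (fun i hi => hN1b i (le_trans hN'N₁ hi))
      rw [← hd, hDdiv (η (k+1)) (hηpos _)] at hGsum
      set B : Finset ℕ := (Finset.range N' \ (Finset.range N ∪ F)) ∪ G with hB
      have hsub : Finset.range N ∪ F ⊆ Finset.range N' := by
        intro i hi
        rw [Finset.mem_union] at hi
        rw [Finset.mem_range]
        rcases hi with hi | hi
        · rw [Finset.mem_range] at hi; omega
        · have := hN'F i hi; omega
      have hBge : ∀ i ∈ B, N ≤ i := by
        intro i hi
        rw [hB, Finset.mem_union] at hi
        rcases hi with hi | hi
        · rw [Finset.mem_sdiff, Finset.mem_union] at hi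
          push_neg at hi
          have := hi.2.1
          rw [Finset.mem_range] at this
          omega
        · have := hGge i hi; omega
      have hGhigh : ∀ i ∈ G, i ∉ Finset.range N' := by
        intro i hi
        rw [Finset.mem_range]
        have := hGge i hi
        omega
      have hdisjFG : Disjoint (Finset.range N' \ (Finset.range N ∪ F)) G := by
        rw [Finset.disjoint_right]
        intro i hiG hisd
        exact hGhigh i hiG (Finset.mem_sdiff.mp hisd).1
      have hrangeF : Disjoint (Finset.range N) F := by
        rw [Finset.disjoint_right]
        intro i hiF hir
        rw [Finset.mem_range] at hir
        have := I3 i hiF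
        omega
      have hBnorm : ∀ i ∈ B, ‖y i‖ ≤ η k := fun i hi => I2 i (hBge i hi)
      have hBsum : ∑ i ∈ B, y i
          = ((∑ n ∈ Finset.range N', y n) - a) - ((∑ n ∈ Finset.range N, y n) - a)
            - ((∑ i ∈ F, y i) - v) + ((∑ i ∈ G, y i) - v) := by
        rw [hB, Finset.sum_union hdisjFG]
        have h1 : ∑ i ∈ Finset.range N' \ (Finset.range N ∪ F), y i
            = (∑ n ∈ Finset.range N', y n) - ∑ i ∈ Finset.range N ∪ F, y i := by
          rw [eq_sub_iff_add_eq, Finset.sum_sdiff hsub]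
        rw [h1, Finset.sum_union hrangeF]
        abel
      have hBsmall : ‖∑ i ∈ B, y i‖ ≤ 4 * η k := by
        rw [hBsum]
        have e1 : ‖(∑ n ∈ Finset.range N', y n) - a‖ ≤ η k :=
          le_trans (hN1a N' hN'N₁) (le_trans hled (hηmono k (k+1) (Nat.le_succ k)))
        have e2 : ‖(∑ n ∈ Finset.range N, y n) - a‖ ≤ η k := I1 N le_rfl
        have e3 : ‖(∑ i ∈ F, y i) - v‖ ≤ η k := I4
        have e4 : ‖(∑ i ∈ G, y i) - v‖ ≤ η k := le_trans hGsum (hηmono k (k+1) (Nat.le_succ k))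
        calc ‖_ - _ - _ + _‖ ≤ ‖_ - _ - _‖ + ‖_‖ := norm_add_le _ _
          _ ≤ (‖_ - _‖ + ‖_‖) + ‖_‖ := by gcongr ?_ + _; exact norm_sub_le _ _
          _ ≤ ((‖_‖ + ‖_‖) + ‖_‖) + ‖_‖ := by gcongr ?_ + _ + _; exact norm_sub_le _ _
          _ ≤ ((η k + η k) + η k) + η k := by gcongr
          _ = 4 * η k := by ring
      obtain ⟨lB, hlBnd, hlBfin, hlBpre⟩ :=
        confine y (η k) (4 * η k) (hηpos k).le (by positivity) B hBnorm hBsmall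
      have hdisjLB : Disjoint L.toFinset B := by
        rw [I6, Finset.disjoint_left]
        intro i hiL hiB
        rw [hB, Finset.mem_union] at hiB
        rcases hiB with hiB | hiB
        · exact (Finset.mem_sdiff.mp hiB).2 hiL
        · exact hGhigh i hiB (hsub hiL)
      have hBne : B.Nonempty := by
        refine ⟨N' - 1, ?_⟩
        rw [hB, Finset.mem_union]
        left
        rw [Finset.mem_sdiff, Finset.mem_range, Finset.mem_union, Finset.mem_range]
        refine ⟨by omega, ?_⟩
        push_neg
        constructor
        · omega
        · intro hmem
          have := hN'F _ hmem
          omega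
      have hlBlen : lB.length = B.card := by
        rw [← hlBfin, List.toFinset_card_of_nodup hlBnd]
      refine ⟨(N', G, L ++ lB), ⟨?_, ?_, ?_, ?_, ?_, ?_, ?_⟩, ?_, ?_, ?_⟩
      · exact fun m hm => le_trans (hN1a m (le_trans hN'N₁ hm)) hled
      · exact fun i hi => le_trans (hN1b i (le_trans hN'N₁ hi)) hled
      · exact hGge
      · exact hGsum
      · exact I5.append hlBnd (List.disjoint_toFinset_iff_disjoint.mp
          (hlBfin ▸ hdisjLB))
      · show (L ++ lB).toFinset = Finset.range N' ∪ G
        rw [List.toFinset_append, I6, hlBfin, hB]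
        rw [← Finset.union_assoc, Finset.union_sdiff_of_subset hsub]
      · show k + 1 ≤ (L ++ lB).length
        rw [List.length_append, hlBlen]
        have : 1 ≤ B.card := Finset.card_pos.mpr hBne
        omega
      · exact List.prefix_append L lB
      · show N < N'
        omega
      · -- the take bound
        intro m hm1 hm2
        simp only at hm1 hm2 ⊢
        rw [List.length_append] at hm2
        have htake : (L ++ lB).take m = L ++ lB.take (m - L.length) := by
          rw [List.take_append, List.take_of_length_le hm1]
        rw [htake]
        set p := lB.take (m - L.length) with hp
        have hppre : p <+: lB := List.take_prefix _ _
        have hpsub : p.toFinset ⊆ B := by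
          rw [← hlBfin]
          intro i hi
          rw [List.mem_toFinset] at hi ⊢
          exact hppre.sublist.subset hi
        have hdisjLp : Disjoint L.toFinset p.toFinset :=
          Finset.disjoint_of_subset_right hpsub hdisjLB
        rw [List.toFinset_append, Finset.sum_union hdisjLp]
        have hLsum : ∑ i ∈ L.toFinset, y i
            = (∑ n ∈ Finset.range N, y n) + ∑ i ∈ F, y i := by
          rw [I6, Finset.sum_union hrangeF]
        have hpbound : ‖∑ i ∈ p.toFinset, y i‖ ≤ d * (η k + 4 * η k) + 4 * η k := by
          rw [hd]
          exact hlBpre p hppre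
        have hLbound : ‖(∑ i ∈ L.toFinset, y i) - (a + v)‖ ≤ 2 * η k := by
          rw [hLsum]
          have e2 : ‖(∑ n ∈ Finset.range N, y n) - a‖ ≤ η k := I1 N le_rfl
          have e3 : ‖(∑ i ∈ F, y i) - v‖ ≤ η k := I4
          calc ‖(∑ n ∈ Finset.range N, y n) + (∑ i ∈ F, y i) - (a + v)‖
              = ‖((∑ n ∈ Finset.range N, y n) - a) + ((∑ i ∈ F, y i) - v)‖ := by
                congr 1; abel
            _ ≤ ‖(∑ n ∈ Finset.range N, y n) - a‖ + ‖(∑ i ∈ F, y i) - v‖ :=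
                norm_add_le _ _
            _ ≤ 2 * η k := by linarith
        calc ‖(∑ i ∈ L.toFinset, y i) + (∑ i ∈ p.toFinset, y i) - (a + v)‖
            = ‖((∑ i ∈ L.toFinset, y i) - (a + v)) + ∑ i ∈ p.toFinset, y i‖ := by
              congr 1; abel
          _ ≤ ‖(∑ i ∈ L.toFinset, y i) - (a + v)‖ + ‖∑ i ∈ p.toFinset, y i‖ :=
              norm_add_le _ _
          _ ≤ 2 * η k + (d * (η k + 4 * η k) + 4 * η k) := by linarith
          _ = Cb * η k := by rw [hCb]; ring)
  -- Assemble the permutation from the chain of states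
  set Lk : ℕ → List ℕ := fun k => (g k).2.2 with hLk
  have hnd : ∀ k, (Lk k).Nodup := fun k => (hg k).2.2.2.2.1
  have hlen : ∀ k, k ≤ (Lk k).length := fun k => (hg k).2.2.2.2.2.2
  have hfin : ∀ k, (Lk k).toFinset = Finset.range (g k).1 ∪ (g k).2.1 :=
    fun k => (hg k).2.2.2.2.2.1
  have hpref1 : ∀ k, Lk k <+: Lk (k+1) := fun k => (hlink k).1
  have hNlt : ∀ k, (g k).1 < (g (k+1)).1 := fun k => (hlink k).2.1
  have hblock : ∀ k m, (Lk k).length ≤ m → m ≤ (Lk (k+1)).length →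
      ‖(∑ i ∈ ((Lk (k+1)).take m).toFinset, y i) - (a + v)‖ ≤ Cb * η k :=
    fun k => (hlink k).2.2
  have hpref : ∀ j k, j ≤ k → Lk j <+: Lk k := by
    intro j k h
    induction h with
    | refl => exact List.prefix_refl _
    | step _ IH => exact IH.trans (hpref1 _)
  have hNk : ∀ k, k ≤ (g k).1 := by
    intro k
    induction k with
    | zero => exact Nat.zero_le _
    | succ k IH => exact Nat.succ_le_of_lt (lt_of_le_of_lt IH (hNlt k))
  set f : ℕ → ℕ := fun n => (Lk (n+1)).getD n 0 with hf
  have hf_eq : ∀ K n, n < (Lk K).length → f n = (Lk K).getD n 0 := by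
    intro K n hn
    have hn1 : n < (Lk (n+1)).length := lt_of_lt_of_le (Nat.lt_succ_self n) (hlen (n+1))
    show (Lk (n+1)).getD n 0 = (Lk K).getD n 0
    rcases le_total (n+1) K with h | h
    · have hp := hpref (n+1) K h
      rw [List.getD_eq_getElem _ _ hn1, List.getD_eq_getElem _ _ hn, hp.getElem hn1]
    · have hp := hpref K (n+1) h
      rw [List.getD_eq_getElem _ _ hn1, List.getD_eq_getElem _ _ hn, hp.getElem hn]
  have hkey : ∀ m n, m < n → f m = f n → False := by
    intro m n hmn he
    have hn1 : n < (Lk (n+1)).length := lt_of_lt_of_le (Nat.lt_succ_self n) (hlen (n+1))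
    have hm1 : m < (Lk (n+1)).length := lt_trans hmn hn1
    have hem : f m = (Lk (n+1)).getD m 0 := hf_eq (n+1) m hm1
    have hen : f n = (Lk (n+1)).getD n 0 := hf_eq (n+1) n hn1
    rw [hem, hen, List.getD_eq_getElem _ _ hm1, List.getD_eq_getElem _ _ hn1] at he
    have := (List.Nodup.getElem_inj_iff (hnd (n+1)) (hi := hm1) (hj := hn1)).mp he
    omega
  have hinj : Function.Injective f := by
    intro m n he
    rcases lt_trichotomy m n with h | h | h
    · exact absurd he (fun he => (hkey m n h he).elim)
    · exact h
    · exact absurd he.symm (fun he => (hkey n m h he).elim)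
  have hsurj : Function.Surjective f := by
    intro j
    have hj : j ∈ (Lk (j+1)).toFinset := by
      rw [hfin, Finset.mem_union]
      left
      rw [Finset.mem_range]
      exact lt_of_lt_of_le (Nat.lt_succ_self j) (hNk (j+1))
    rw [List.mem_toFinset] at hj
    obtain ⟨p, hp, hpe⟩ := List.getElem_of_mem hj
    refine ⟨p, ?_⟩
    rw [hf_eq (j+1) p hp, List.getD_eq_getElem _ _ hp]
    exact hpe
  refine ⟨Equiv.ofBijective f ⟨hinj, hsurj⟩, ?_⟩
  rw [Metric.tendsto_atTop]
  intro ε hε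
  obtain ⟨K, hK⟩ := Metric.tendsto_atTop.mp hη0 (ε / Cb) (by positivity)
  have hKb : Cb * η K < ε := by
    have := hK K le_rfl
    rw [dist_eq_norm, sub_zero, Real.norm_eq_abs, abs_of_pos (hηpos K)] at this
    rw [mul_comm]
    exact (lt_div_iff₀ hCb0).mp this
  refine ⟨(Lk K).length, ?_⟩
  intro m hm
  have hPK : (Lk K).length ≤ m := hm
  have hKm : K ≤ m := le_trans (hlen K) hm
  set kk := Nat.findGreatest (fun k => (Lk k).length ≤ m) m with hkk
  have hkkK : K ≤ kk := Nat.le_findGreatest hKm hPK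
  have hkkP : (Lk kk).length ≤ m := Nat.findGreatest_spec (P := fun k => (Lk k).length ≤ m) hKm hPK
  have hm2 : m ≤ (Lk (kk+1)).length := by
    rcases le_or_gt (kk+1) m with h | h
    · have hng := Nat.findGreatest_is_greatest
        (P := fun k => (Lk k).length ≤ m) (Nat.lt_succ_self kk) h
      exact (not_le.mp hng).le
    · exact le_trans (by omega : m ≤ kk + 1) (hlen (kk+1))
  have hbound := hblock kk m hkkP hm2
  have hsum_eq : ∑ n ∈ Finset.range m, y ((Equiv.ofBijective f ⟨hinj, hsurj⟩) n)
      = ∑ i ∈ ((Lk (kk+1)).take m).toFinset, y i := by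
    rw [take_toFinset_sum y (Lk (kk+1)) (hnd _) m hm2]
    apply Finset.sum_congr rfl
    intro n hn
    rw [Finset.mem_range] at hn
    congr 1
    exact hf_eq (kk+1) n (lt_of_lt_of_le hn hm2)
  rw [dist_eq_norm, hsum_eq]
  calc ‖(∑ i ∈ ((Lk (kk+1)).take m).toFinset, y i) - (a + v)‖
      ≤ Cb * η kk := hbound
    _ ≤ Cb * η K := mul_le_mul_of_nonneg_left (hηmono K kk hkkK) hCb0.le
    _ < ε := hKb
end LS

open Filter Topology

theorem stmt19
    {X : Type*} [NormedAddCommGroup X] [NormedSpace ℝ X] [FiniteDimensional ℝ X]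
    (x : ℕ → X)
    (hne : {s : X | ∃ σ : Equiv.Perm ℕ,
      Tendsto (fun m => ∑ n ∈ Finset.range m, x (σ n)) atTop (𝓝 s)}.Nonempty)
    (a b : X) (t : ℝ)
    (ha : a ∈ {s : X | ∃ σ : Equiv.Perm ℕ,
      Tendsto (fun m => ∑ n ∈ Finset.range m, x (σ n)) atTop (𝓝 s)})
    (hb : b ∈ {s : X | ∃ σ : Equiv.Perm ℕ,
      Tendsto (fun m => ∑ n ∈ Finset.range m, x (σ n)) atTop (𝓝 s)}) :
    (1 - t) • a + t • b ∈ {s : X | ∃ σ : Equiv.Perm ℕ,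
      Tendsto (fun m => ∑ n ∈ Finset.range m, x (σ n)) atTop (𝓝 s)} := by
  obtain ⟨σ, hσ⟩ := ha
  obtain ⟨τ, hτ⟩ := hb
  set y : ℕ → X := fun n => x (σ n) with hy
  -- terms tend to zero
  have hy0 : Tendsto y atTop (𝓝 0) := by
    have h1 : Tendsto (fun n => ∑ i ∈ Finset.range (n+1), y i) atTop (𝓝 a) :=
      hσ.comp (tendsto_add_atTop_nat 1)
    have h2 := h1.sub hσ
    rw [sub_self] at h2
    have he : (fun n => (∑ i ∈ Finset.range (n+1), y i) - ∑ i ∈ Finset.range n, y i)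
        = y := by
      funext n
      rw [Finset.sum_range_succ]
      abel
    rwa [he] at h2
  -- the annihilation property for v = t • (b - a)
  have hv : ∀ f : X →L[ℝ] ℝ, Summable (fun n => |f (y n)|) → f (t • (b - a)) = 0 := by
    intro f hsum
    have hsx : Summable (fun n => |f (x n)|) := (Equiv.summable_iff σ).mp hsum
    have hsx2 : Summable (fun n => f (x n)) := hsx.of_abs
    have key : ∀ (π : Equiv.Perm ℕ) (c : X),
        Tendsto (fun m => ∑ n ∈ Finset.range m, x (π n)) atTop (𝓝 c) →
        f c = ∑' n, f (x n) := by
      intro π c hc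
      have h1 : HasSum (fun n => f (x (π n))) (∑' n, f (x n)) :=
        (Equiv.hasSum_iff π).mpr hsx2.hasSum
      have h2 := h1.tendsto_sum_nat
      have h3 : Tendsto (fun m => f (∑ n ∈ Finset.range m, x (π n))) atTop (𝓝 (f c)) :=
        (f.continuous.tendsto c).comp hc
      have he : (fun m => f (∑ n ∈ Finset.range m, x (π n)))
          = fun m => ∑ n ∈ Finset.range m, f (x (π n)) := by
        funext m
        rw [map_sum]
      rw [he] at h3
      exact tendsto_nhds_unique h3 h2
    have hfa : f a = ∑' n, f (x n) := key σ a hσ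
    have hfb : f b = ∑' n, f (x n) := key τ b hτ
    rw [map_smul, map_sub, hfa, hfb, sub_self, smul_zero]
  obtain ⟨ρ, hρ⟩ := LS.rearrange y a (t • (b - a)) hσ hy0 hv
  refine ⟨ρ.trans σ, ?_⟩
  have he : (fun m => ∑ n ∈ Finset.range m, x ((ρ.trans σ) n))
      = fun m => ∑ n ∈ Finset.range m, y (ρ n) := rfl
  rw [he]
  have hval : a + t • (b - a) = (1 - t) • a + t • b := by
    rw [sub_smul, one_smul, smul_sub]
    abel
  rwa [hval] at hρ
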